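/- For every LTLf formula there is an equivalent ALDLf formula computable in time linear in the size of the input formula; consequently, ALDLf satisfiability is PSPACE-hard. -/

import Mathlib

/-- Propositional formulas over atomic propositions `AP`. -/
inductive PropF (AP : Type) where
  | atom : AP → PropF AP
  | neg : PropF AP → PropF AP
  | conj : PropF AP → PropF AP → PropF AP
  | disj : PropF AP → PropF AP → PropF AP

/-- Truth of a propositional formula in a propositional interpretation. -/
def PropF.holds {AP : Type} (s : Set AP) : PropF AP → Prop
  | .atom p => p ∈ s
  | .neg ζ => ¬ ζ.holds s
  | .conj a b => a.holds s ∧ b.holds s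
  | .disj a b => a.holds s ∨ b.holds s

mutual
/-- ALDLf formulas. -/
inductive ALDLf (AP : Type) where
  | atom : AP → ALDLf AP
  | neg : ALDLf AP → ALDLf AP
  | conj : ALDLf AP → ALDLf AP → ALDLf AP
  | disj : ALDLf AP → ALDLf AP → ALDLf AP
  | dia : PathAut AP → ALDLf AP → ALDLf AP
  | box : PathAut AP → ALDLf AP → ALDLf AP

/-- Alphabet letters of a path automaton: forward propositional labels ζ,
backward (past) labels ζ⁻, and tests ψ?. -/
inductive PALabel (AP : Type) where
  | fwd : PropF AP → PALabel AP
  | bwd : PropF AP → PALabel AP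
  | test : ALDLf AP → PALabel AP

/-- A path automaton `(R, T, Δ, r, G)`: states, alphabet, transitions,
start state, accepting states.  States are natural numbers. -/
inductive PathAut (AP : Type) where
  | mk : List ℕ → List (PALabel AP) → List (ℕ × PALabel AP × ℕ) → ℕ → List ℕ → PathAut AP
end

/-- Satisfaction of a propositional formula at position `k` of a trace. -/
def propAt {AP : Type} (π : List (Set AP)) (k : ℕ) (ζ : PropF AP) : Prop :=
  ∃ s, π[k]? = some s ∧ ζ.holds s

/-- One step of a path automaton over a trace, with tests evaluated by the
oracle `T`. -/
def AutStep {AP : Type} (T : ℕ → ALDLf AP → Prop) (π : List (Set AP))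
    (Δ : List (ℕ × PALabel AP × ℕ)) (c c' : ℕ × ℕ) : Prop :=
  (c'.2 = c.2 + 1 ∧ ∃ ζ, (c.1, PALabel.fwd ζ, c'.1) ∈ Δ ∧ propAt π c.2 ζ) ∨
  (c'.2 + 1 = c.2 ∧ ∃ ζ, (c.1, PALabel.bwd ζ, c'.1) ∈ Δ ∧ propAt π c.2 ζ) ∨
  (c'.2 = c.2 ∧ ∃ ψ, (c.1, PALabel.test ψ, c'.1) ∈ Δ ∧ T c.2 ψ)

/-- `π,i,j ⊨ U`, with tests evaluated by the oracle `T`: either `i = j` and the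
start state is accepting, or there is a finite sequence of state–position pairs
following the transitions of `U` from `(r,i)` to an accepting state at `j`. -/
def AutRelO {AP : Type} (T : ℕ → ALDLf AP → Prop) (π : List (Set AP)) :
    PathAut AP → ℕ → ℕ → Prop
  | .mk _ _ Δ r G, i, j =>
    (i = j ∧ r ∈ G) ∨
    ∃ seq : List (ℕ × ℕ), seq.head? = some (r, i) ∧
      (∃ l, seq.getLast? = some l ∧ l.1 ∈ G ∧ l.2 = j) ∧
      (∀ e ∈ seq, e.2 < π.length) ∧
      (∀ m, ∀ h : m + 1 < seq.length,
        AutStep T π Δ (seq.get ⟨m, by omega⟩) (seq.get ⟨m + 1, h⟩))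

/-- Fuelled satisfaction relation for ALDLf.  The fuel strictly exceeds the
structural size (`sizeOf`) of every formula it is ever applied to, so
`satF (sizeOf φ) π i φ` agrees with the intended (well-founded) semantics. -/
def satF {AP : Type} : ℕ → List (Set AP) → ℕ → ALDLf AP → Prop
  | 0, _, _, _ => False
  | _ + 1, π, i, .atom p => ∃ s, π[i]? = some s ∧ p ∈ s
  | n + 1, π, i, .neg φ => ¬ satF n π i φ
  | n + 1, π, i, .conj a b => satF n π i a ∧ satF n π i b
  | n + 1, π, i, .disj a b => satF n π i a ∨ satF n π i b
  | n + 1, π, i, .dia U φ =>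
      ∃ j, j < π.length ∧ AutRelO (fun k ψ => satF n π k ψ) π U i j ∧ satF n π j φ
  | n + 1, π, i, .box U φ =>
      ∀ j, j < π.length → AutRelO (fun k ψ => satF n π k ψ) π U i j → satF n π j φ

/-- `π,i ⊨ φ` for ALDLf. -/
def ALDLf.Sat {AP : Type} (π : List (Set AP)) (i : ℕ) (φ : ALDLf AP) : Prop :=
  satF (sizeOf φ) π i φ

/-- `π,i,j ⊨ U` with tests evaluated by genuine ALDLf satisfaction. -/
def AutRel {AP : Type} (π : List (Set AP)) (U : PathAut AP) (i j : ℕ) : Prop :=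
  AutRelO (fun k ψ => ALDLf.Sat π k ψ) π U i j

/-- The size `|φ|` of an ALDLf formula, as in the paper. -/
def ALDLf.size {AP : Type} : ALDLf AP → ℕ
  | .atom _ => 1
  | .neg φ => 3 + φ.size
  | .conj a b => 3 + a.size + b.size
  | .disj a b => 3 + a.size + b.size
  | .dia (.mk R _ _ _ _) φ => 4 + R.length + φ.size
  | .box (.mk R _ _ _ _) φ => 4 + R.length + φ.size
/-- LTLf formulas. -/
inductive LTLf (AP : Type) where
  | atom : AP → LTLf AP
  | neg : LTLf AP → LTLf AP
  | conj : LTLf AP → LTLf AP → LTLf AP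
  | disj : LTLf AP → LTLf AP → LTLf AP
  | next : LTLf AP → LTLf AP
  | until_ : LTLf AP → LTLf AP → LTLf AP

/-- LTLf satisfaction `π,i ⊨ φ` over finite traces. -/
def LTLf.Sat {AP : Type} (π : List (Set AP)) : LTLf AP → ℕ → Prop
  | .atom p, i => ∃ s, π[i]? = some s ∧ p ∈ s
  | .neg φ, i => ¬ φ.Sat π i
  | .conj a b, i => a.Sat π i ∧ b.Sat π i
  | .disj a b, i => a.Sat π i ∨ b.Sat π i
  | .next φ, i => i + 1 < π.length ∧ φ.Sat π (i + 1)
  | .until_ a b, i => ∃ j, i ≤ j ∧ j < π.length ∧ b.Sat π j ∧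
      ∀ k, i ≤ k → k < j → a.Sat π k

/-- Size of an LTLf formula. -/
def LTLf.size {AP : Type} : LTLf AP → ℕ
  | .atom _ => 1
  | .neg φ => 1 + φ.size
  | .conj a b => 1 + a.size + b.size
  | .disj a b => 1 + a.size + b.size
  | .next φ => 1 + φ.size
  | .until_ a b => 1 + a.size + b.size


section Aux

variable {AP : Type}

lemma ALDLf.one_le_sizeOf (φ : ALDLf AP) : 1 ≤ sizeOf φ := by
  cases φ with
  | atom p => rw [ALDLf.atom.sizeOf_spec]; omega
  | neg φ => rw [ALDLf.neg.sizeOf_spec]; omega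
  | conj a b => rw [ALDLf.conj.sizeOf_spec]; omega
  | disj a b => rw [ALDLf.disj.sizeOf_spec]; omega
  | dia U φ => rw [ALDLf.dia.sizeOf_spec]; omega
  | box U φ => rw [ALDLf.box.sizeOf_spec]; omega

lemma test_sizeOf_lt {Δ : List (ℕ × PALabel AP × ℕ)} {s t : ℕ} {ψ : ALDLf AP}
    (h : (s, PALabel.test ψ, t) ∈ Δ) (R Tl : List _) (r : ℕ) (G : List ℕ) :
    sizeOf ψ < sizeOf (PathAut.mk R Tl Δ r G) := by
  have h1 := List.sizeOf_lt_of_mem h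
  have h2 : sizeOf (s, PALabel.test ψ, t) = 1 + sizeOf s + (1 + (1 + sizeOf ψ) + sizeOf t) := by
    rw [Prod.mk.sizeOf_spec, Prod.mk.sizeOf_spec, PALabel.test.sizeOf_spec]
  rw [PathAut.mk.sizeOf_spec]
  omega

lemma AutStep_congr {T1 T2 : ℕ → ALDLf AP → Prop} {π : List (Set AP)}
    {Δ : List (ℕ × PALabel AP × ℕ)} {c c' : ℕ × ℕ}
    (h : ∀ k ψ, (∃ s t, (s, PALabel.test ψ, t) ∈ Δ) → (T1 k ψ ↔ T2 k ψ)) :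
    AutStep T1 π Δ c c' ↔ AutStep T2 π Δ c c' := by
  unfold AutStep
  refine or_congr Iff.rfl (or_congr Iff.rfl (and_congr Iff.rfl (exists_congr fun ψ => ?_)))
  constructor
  · rintro ⟨hm, hT⟩; exact ⟨hm, (h _ _ ⟨_, _, hm⟩).1 hT⟩
  · rintro ⟨hm, hT⟩; exact ⟨hm, (h _ _ ⟨_, _, hm⟩).2 hT⟩

lemma AutRelO_congr {T1 T2 : ℕ → ALDLf AP → Prop} {π : List (Set AP)}
    {R : List ℕ} {Tl : List (PALabel AP)} {Δ : List (ℕ × PALabel AP × ℕ)} {r : ℕ} {G : List ℕ}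
    {i j : ℕ}
    (h : ∀ k ψ, (∃ s t, (s, PALabel.test ψ, t) ∈ Δ) → (T1 k ψ ↔ T2 k ψ)) :
    AutRelO T1 π (.mk R Tl Δ r G) i j ↔ AutRelO T2 π (.mk R Tl Δ r G) i j := by
  simp only [AutRelO]
  refine or_congr Iff.rfl (exists_congr fun seq =>
    and_congr Iff.rfl (and_congr Iff.rfl (and_congr Iff.rfl ?_)))
  exact forall_congr' fun m => forall_congr' fun hm => AutStep_congr h

lemma satF_eq : ∀ n m (π : List (Set AP)) (i : ℕ) (φ : ALDLf AP),
    sizeOf φ ≤ n → sizeOf φ ≤ m → (satF n π i φ ↔ satF m π i φ) := by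
  intro n
  induction n using Nat.strong_induction_on with
  | _ n IH =>
  intro m π i φ hn hm
  have h1 := φ.one_le_sizeOf
  obtain ⟨n, rfl⟩ : ∃ n', n = n' + 1 := ⟨n - 1, by omega⟩
  obtain ⟨m, rfl⟩ : ∃ m', m = m' + 1 := ⟨m - 1, by omega⟩
  cases φ with
  | atom p => simp only [satF]
  | neg φ =>
    rw [ALDLf.neg.sizeOf_spec] at hn hm
    simp only [satF]
    rw [IH n (by omega) m π i φ (by omega) (by omega)]
  | conj a b =>
    rw [ALDLf.conj.sizeOf_spec] at hn hm
    have ha := a.one_le_sizeOf; have hb := b.one_le_sizeOf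
    simp only [satF]
    rw [IH n (by omega) m π i a (by omega) (by omega),
        IH n (by omega) m π i b (by omega) (by omega)]
  | disj a b =>
    rw [ALDLf.disj.sizeOf_spec] at hn hm
    have ha := a.one_le_sizeOf; have hb := b.one_le_sizeOf
    simp only [satF]
    rw [IH n (by omega) m π i a (by omega) (by omega),
        IH n (by omega) m π i b (by omega) (by omega)]
  | dia U φ =>
    rw [ALDLf.dia.sizeOf_spec] at hn hm
    have hφ := φ.one_le_sizeOf
    cases U with | mk R Tl Δ r G =>
    have key : ∀ k ψ, (∃ s t, (s, PALabel.test ψ, t) ∈ Δ) →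
        (satF n π k ψ ↔ satF m π k ψ) := by
      rintro k ψ ⟨s, t, hmem⟩
      have h2 := test_sizeOf_lt hmem R Tl r G
      exact IH n (by omega) m π k ψ (by omega) (by omega)
    simp only [satF]
    refine exists_congr fun j => and_congr Iff.rfl (and_congr (AutRelO_congr key) ?_)
    exact IH n (by omega) m π j φ (by omega) (by omega)
  | box U φ =>
    rw [ALDLf.box.sizeOf_spec] at hn hm
    have hφ := φ.one_le_sizeOf
    cases U with | mk R Tl Δ r G =>
    have key : ∀ k ψ, (∃ s t, (s, PALabel.test ψ, t) ∈ Δ) →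
        (satF n π k ψ ↔ satF m π k ψ) := by
      rintro k ψ ⟨s, t, hmem⟩
      have h2 := test_sizeOf_lt hmem R Tl r G
      exact IH n (by omega) m π k ψ (by omega) (by omega)
    simp only [satF]
    refine forall_congr' fun j => imp_congr Iff.rfl (imp_congr (AutRelO_congr key) ?_)
    exact IH n (by omega) m π j φ (by omega) (by omega)

lemma sat_iff {π : List (Set AP)} {i : ℕ} {φ : ALDLf AP} {n : ℕ} (h : sizeOf φ ≤ n) :
    ALDLf.Sat π i φ ↔ satF n π i φ :=
  satF_eq _ _ π i φ le_rfl h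

lemma sat_atom {π : List (Set AP)} {i : ℕ} {p : AP} :
    ALDLf.Sat π i (.atom p) ↔ ∃ s, π[i]? = some s ∧ p ∈ s := by
  obtain ⟨k, hk⟩ : ∃ k, sizeOf (ALDLf.atom p : ALDLf AP) = k + 1 :=
    ⟨sizeOf (ALDLf.atom p : ALDLf AP) - 1, by have := (ALDLf.atom p : ALDLf AP).one_le_sizeOf; omega⟩
  unfold ALDLf.Sat
  rw [hk]
  simp only [satF]

lemma sat_neg {π : List (Set AP)} {i : ℕ} {φ : ALDLf AP} :
    ALDLf.Sat π i (.neg φ) ↔ ¬ ALDLf.Sat π i φ := by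
  rw [sat_iff (show sizeOf (ALDLf.neg φ) ≤ sizeOf φ + 1 by rw [ALDLf.neg.sizeOf_spec]; omega)]
  simp only [satF]
  rfl

lemma sat_conj {π : List (Set AP)} {i : ℕ} {a b : ALDLf AP} :
    ALDLf.Sat π i (.conj a b) ↔ (ALDLf.Sat π i a ∧ ALDLf.Sat π i b) := by
  rw [sat_iff (show sizeOf (ALDLf.conj a b) ≤ sizeOf a + sizeOf b + 1 by
    rw [ALDLf.conj.sizeOf_spec]; omega)]
  simp only [satF]
  rw [← sat_iff (Nat.le_add_right _ _), ← sat_iff (Nat.le_add_left _ _)]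

lemma sat_disj {π : List (Set AP)} {i : ℕ} {a b : ALDLf AP} :
    ALDLf.Sat π i (.disj a b) ↔ (ALDLf.Sat π i a ∨ ALDLf.Sat π i b) := by
  rw [sat_iff (show sizeOf (ALDLf.disj a b) ≤ sizeOf a + sizeOf b + 1 by
    rw [ALDLf.disj.sizeOf_spec]; omega)]
  simp only [satF]
  rw [← sat_iff (Nat.le_add_right _ _), ← sat_iff (Nat.le_add_left _ _)]

lemma sat_dia {π : List (Set AP)} {i : ℕ} (U : PathAut AP) (φ : ALDLf AP) :
    ALDLf.Sat π i (.dia U φ) ↔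
      ∃ j, j < π.length ∧ AutRel π U i j ∧ ALDLf.Sat π j φ := by
  cases U with | mk R Tl Δ r G =>
  rw [sat_iff (show sizeOf (ALDLf.dia (PathAut.mk R Tl Δ r G) φ)
      ≤ (sizeOf (PathAut.mk R Tl Δ r G) + sizeOf φ) + 1 by rw [ALDLf.dia.sizeOf_spec]; omega)]
  simp only [satF]
  unfold AutRel
  refine exists_congr fun j => and_congr Iff.rfl (and_congr ?_ ?_)
  · refine AutRelO_congr fun k ψ h => ?_
    obtain ⟨s, t, hmem⟩ := h
    have h2 := test_sizeOf_lt hmem R Tl r G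
    exact (sat_iff (by omega)).symm
  · exact (sat_iff (Nat.le_add_left _ _)).symm

/-- A tautological propositional formula built from the atom `a`. -/
def topP (a : AP) : PropF AP := .disj (.atom a) (.neg (.atom a))

lemma topP_at (a : AP) (π : List (Set AP)) (k : ℕ) : propAt π k (topP a) ↔ k < π.length := by
  constructor
  · rintro ⟨s, hs, -⟩
    obtain ⟨h, -⟩ := List.getElem?_eq_some_iff.mp hs
    exact h
  · intro h
    refine ⟨π.get ⟨k, h⟩, List.getElem?_eq_getElem h, ?_⟩
    show (PropF.atom a).holds _ ∨ ¬ (PropF.atom a).holds _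
    exact Classical.em _

/-- The path automaton capturing the Next operator. -/
def Unext (a : AP) : PathAut AP := .mk [0, 1] [] [(0, PALabel.fwd (topP a), 1)] 0 [1]

lemma relNext (a : AP) (T : ℕ → ALDLf AP → Prop) (π : List (Set AP)) (i j : ℕ) :
    AutRelO T π (Unext a) i j ↔ (j = i + 1 ∧ i < π.length ∧ j < π.length) := by
  constructor
  · intro h
    simp only [Unext, AutRelO] at h
    rcases h with ⟨-, h⟩ | ⟨seq, hhead, ⟨l, hlast, hG, hj⟩, hmem, hstep⟩
    · simp at h
    · cases seq with
      | nil => simp at hhead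
      | cons e1 tl =>
        rw [List.head?_cons, Option.some.injEq] at hhead
        subst hhead
        cases tl with
        | nil =>
          rw [List.getLast?_singleton, Option.some.injEq] at hlast
          subst hlast
          simp at hG
        | cons e2 tl2 =>
          obtain ⟨e21, e22⟩ := e2
          have h0 : AutStep T π [(0, PALabel.fwd (topP a), 1)] (0, i) (e21, e22) :=
            hstep 0 (by simp only [List.length_cons]; omega)
          unfold AutStep at h0
          rcases h0 with ⟨he, ζ, hmem', hprop⟩ | ⟨he, ζ, hmem', -⟩ | ⟨he, ψ, hmem', -⟩
          · simp only [List.mem_singleton, Prod.mk.injEq, PALabel.fwd.injEq, true_and] at hmem'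
            obtain ⟨rfl, rfl⟩ := hmem'
            simp only at he
            subst he
            have hi : i < π.length := (topP_at a π i).1 hprop
            cases tl2 with
            | nil =>
              rw [show ((0,i) :: [((1:ℕ), i+1)]).getLast? = some (1, i+1) from rfl,
                Option.some.injEq] at hlast
              subst hlast
              simp only at hj
              refine ⟨hj.symm, hi, ?_⟩
              rw [← hj]
              exact hmem (1, i+1) (by simp)
            | cons e3 tl3 =>
              obtain ⟨e31, e32⟩ := e3
              have h1 : AutStep T π [(0, PALabel.fwd (topP a), 1)] (1, i+1) (e31, e32) :=
                hstep 1 (by simp only [List.length_cons]; omega)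
              unfold AutStep at h1
              rcases h1 with ⟨-, ζ, hmem', -⟩ | ⟨-, ζ, hmem', -⟩ | ⟨-, ψ, hmem', -⟩ <;>
                simp at hmem'
          · simp at hmem'
          · simp at hmem'
  · rintro ⟨rfl, hi, hj⟩
    simp only [Unext, AutRelO]
    refine Or.inr ⟨[(0, i), (1, i+1)], rfl, ⟨(1, i+1), rfl, by simp, rfl⟩, ?_, ?_⟩
    · intro e he
      simp only [List.mem_cons, List.mem_singleton, List.not_mem_nil, or_false] at he
      rcases he with rfl | rfl
      · exact hi
      · exact hj
    · intro m hm
      rcases m with _ | m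
      · show AutStep T π [(0, PALabel.fwd (topP a), 1)] (0, i) (1, i + 1)
        exact Or.inl ⟨rfl, topP a, by simp, (topP_at a π i).2 hi⟩
      · simp only [List.length_cons, List.length_nil] at hm
        omega

/-- Transitions of the path automaton capturing Until, with test `ψ`. -/
def Δu (a : AP) (ψ : ALDLf AP) : List (ℕ × PALabel AP × ℕ) :=
  [(0, PALabel.test ψ, 1), (1, PALabel.fwd (topP a), 0)]

/-- The path automaton capturing the Until operator. -/
def Uun (a : AP) (ψ : ALDLf AP) : PathAut AP := .mk [0, 1] [] (Δu a ψ) 0 [0]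

lemma untilFwd (a : AP) (ψ : ALDLf AP) (T : ℕ → ALDLf AP → Prop) (π : List (Set AP)) (j : ℕ) :
    ∀ N (seq : List (ℕ × ℕ)) (i : ℕ), seq.length ≤ N →
      seq.head? = some (0, i) →
      (∃ l, seq.getLast? = some l ∧ l.1 ∈ ([0] : List ℕ) ∧ l.2 = j) →
      (∀ m, ∀ h : m + 1 < seq.length,
        AutStep T π (Δu a ψ) (seq.get ⟨m, by omega⟩) (seq.get ⟨m + 1, h⟩)) →
      i ≤ j ∧ ∀ k, i ≤ k → k < j → T k ψ := by
  intro N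
  induction N with
  | zero =>
    intro seq i hlen hhead _ _
    cases seq with
    | nil => simp at hhead
    | cons e tl => simp at hlen
  | succ N IH =>
    intro seq i hlen hhead hlast hstep
    cases seq with
    | nil => simp at hhead
    | cons e1 tl =>
      rw [List.head?_cons, Option.some.injEq] at hhead
      subst hhead
      cases tl with
      | nil =>
        obtain ⟨l, hl, -, hj⟩ := hlast
        rw [List.getLast?_singleton, Option.some.injEq] at hl
        subst hl
        simp only at hj
        subst hj
        exact ⟨le_rfl, fun k h1 h2 => absurd h1 (by omega)⟩
      | cons e2 tl2 =>
        obtain ⟨e21, e22⟩ := e2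
        have h0 : AutStep T π (Δu a ψ) (0, i) (e21, e22) :=
          hstep 0 (by simp only [List.length_cons]; omega)
        unfold AutStep at h0
        rcases h0 with ⟨-, ζ, hmem', -⟩ | ⟨-, ζ, hmem', -⟩ | ⟨he, ψ', hmem', hT⟩
        · simp [Δu] at hmem'
        · simp [Δu] at hmem'
        · simp only [Δu, List.mem_cons, List.mem_singleton, List.not_mem_nil, or_false,
            Prod.mk.injEq, PALabel.test.injEq, true_and, false_and, and_false,
            reduceCtorEq, zero_ne_one, one_ne_zero] at hmem'
          obtain ⟨hψ, rfl⟩ := hmem'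
          · have hψ2 : ψ = ψ' := hψ.symm
            subst hψ2
            have he2 : i = e22 := he.symm
            subst he2
            cases tl2 with
            | nil =>
              obtain ⟨l, hl, hG, -⟩ := hlast
              rw [show ((0,i) :: [((1:ℕ), i)]).getLast? = some (1, i) from rfl,
                Option.some.injEq] at hl
              subst hl
              simp at hG
            | cons e3 tl3 =>
              obtain ⟨e31, e32⟩ := e3
              have h1 : AutStep T π (Δu a ψ) (1, i) (e31, e32) :=
                hstep 1 (by simp only [List.length_cons]; omega)
              unfold AutStep at h1
              rcases h1 with ⟨he, ζ, hmem', -⟩ | ⟨-, ζ, hmem', -⟩ | ⟨-, ψ', hmem', -⟩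
              · simp only [Δu, List.mem_cons, List.mem_singleton, List.not_mem_nil, or_false,
                  Prod.mk.injEq, PALabel.fwd.injEq, true_and, false_and, and_false,
                  reduceCtorEq, zero_ne_one, one_ne_zero, false_or] at hmem'
                obtain ⟨rfl, rfl⟩ := hmem'
                · simp only at he
                  subst he
                  have hrec := IH ((0, i + 1) :: tl3) (i + 1)
                    (by simp only [List.length_cons] at hlen ⊢; omega)
                    rfl
                    (by simpa only [List.getLast?_cons_cons] using hlast)
                    (fun m h => hstep (m + 2)
                      (by simp only [List.length_cons] at h ⊢; omega))
                  refine ⟨by omega, fun k hk1 hk2 => ?_⟩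
                  rcases Nat.eq_or_lt_of_le hk1 with rfl | hlt
                  · exact hT
                  · exact hrec.2 k (by omega) hk2
              · simp [Δu] at hmem'
              · simp [Δu] at hmem'

/-- The canonical accepting run of the until automaton from `i` spanning `d` steps. -/
def runU : ℕ → ℕ → List (ℕ × ℕ)
  | i, 0 => [(0, i)]
  | i, d + 1 => (0, i) :: (1, i) :: runU (i + 1) d

lemma runU_cons (i d : ℕ) : ∃ tl, runU i d = (0, i) :: tl := by
  cases d <;> exact ⟨_, rfl⟩

lemma runU_head (i d : ℕ) : (runU i d).head? = some (0, i) := by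
  obtain ⟨tl, h⟩ := runU_cons i d
  rw [h, List.head?_cons]

lemma runU_last (i d : ℕ) : (runU i d).getLast? = some (0, i + d) := by
  induction d generalizing i with
  | zero => rfl
  | succ d IHd =>
    obtain ⟨tl, h⟩ := runU_cons (i + 1) d
    have harith : i + (d + 1) = (i + 1) + d := by omega
    rw [harith]
    show ((0, i) :: (1, i) :: runU (i + 1) d).getLast? = _
    rw [List.getLast?_cons_cons, h, List.getLast?_cons_cons, ← h]
    exact IHd (i + 1)

lemma runU_mem (i d : ℕ) : ∀ e ∈ runU i d, i ≤ e.2 ∧ e.2 ≤ i + d := by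
  induction d generalizing i with
  | zero =>
    intro e he
    simp only [runU, List.mem_singleton] at he
    subst he
    omega
  | succ d IHd =>
    intro e he
    simp only [runU, List.mem_cons] at he
    rcases he with rfl | rfl | h
    · omega
    · omega
    · have := IHd (i + 1) e h
      omega

lemma runU_length (i d : ℕ) : (runU i d).length = 2 * d + 1 := by
  induction d generalizing i with
  | zero => rfl
  | succ d IHd =>
    show ((0, i) :: (1, i) :: runU (i + 1) d).length = _
    simp only [List.length_cons, IHd]
    omega

lemma runU_step (a : AP) (ψ : ALDLf AP) (T : ℕ → ALDLf AP → Prop) (π : List (Set AP)) :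
    ∀ d i, i + d < π.length → (∀ k, i ≤ k → k < i + d → T k ψ) →
    ∀ m, ∀ h : m + 1 < (runU i d).length,
      AutStep T π (Δu a ψ) ((runU i d).get ⟨m, by omega⟩) ((runU i d).get ⟨m + 1, h⟩) := by
  intro d
  induction d with
  | zero =>
    intro i _ _ m h
    rw [runU_length] at h
    omega
  | succ d IHd =>
    intro i hlen hT m h
    rcases m with _ | _ | m'
    · show AutStep T π (Δu a ψ) (0, i) (1, i)
      exact Or.inr (Or.inr ⟨rfl, ψ, by simp [Δu], hT i le_rfl (by omega)⟩)
    · obtain ⟨tl, hc⟩ := runU_cons (i + 1) d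
      have hrw : runU i (d + 1) = (0, i) :: (1, i) :: (0, i + 1) :: tl := by
        show (0, i) :: (1, i) :: runU (i + 1) d = _
        rw [hc]
      simp only [List.get_of_eq hrw]
      show AutStep T π (Δu a ψ) (1, i) (0, i + 1)
      exact Or.inl ⟨rfl, topP a, by simp [Δu], (topP_at a π i).2 (by omega)⟩
    · have h' : m' + 1 < (runU (i + 1) d).length := by
        rw [runU_length] at h ⊢
        omega
      exact IHd (i + 1) (by omega) (fun k hk1 hk2 => hT k (by omega) (by omega)) m' h'

lemma relUntil (a : AP) (ψ : ALDLf AP) (T : ℕ → ALDLf AP → Prop) (π : List (Set AP))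
    (i j : ℕ) (hj : j < π.length) :
    AutRelO T π (Uun a ψ) i j ↔ (i ≤ j ∧ ∀ k, i ≤ k → k < j → T k ψ) := by
  constructor
  · intro h
    simp only [Uun, AutRelO] at h
    rcases h with ⟨rfl, -⟩ | ⟨seq, hhead, hlast, -, hstep⟩
    · exact ⟨le_rfl, fun k h1 h2 => absurd h1 (by omega)⟩
    · exact untilFwd a ψ T π j seq.length seq i le_rfl hhead hlast hstep
  · rintro ⟨hij, hT⟩
    simp only [Uun, AutRelO]
    rcases Nat.eq_or_lt_of_le hij with rfl | hlt
    · exact Or.inl ⟨rfl, by simp⟩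
    · refine Or.inr ⟨runU i (j - i), runU_head i (j - i), ?_, ?_, ?_⟩
      · refine ⟨(0, j), ?_, by simp, rfl⟩
        rw [runU_last, show i + (j - i) = j from by omega]
      · intro e he
        have := runU_mem i (j - i) e he
        omega
      · exact runU_step a ψ T π (j - i) i (by omega) (fun k h1 h2 => hT k h1 (by omega))

/-- The linear translation from LTLf to ALDLf (given a distinguished atom `a`). -/
def trL (a : AP) : LTLf AP → ALDLf AP
  | .atom p => .atom p
  | .neg φ => .neg (trL a φ)
  | .conj x y => .conj (trL a x) (trL a y)
  | .disj x y => .disj (trL a x) (trL a y)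
  | .next φ => .dia (Unext a) (trL a φ)
  | .until_ x y => .dia (Uun a (trL a x)) (trL a y)

lemma trL_size (a : AP) (φ : LTLf AP) : (trL a φ).size ≤ 6 * φ.size := by
  induction φ with
  | atom p => simp [trL, ALDLf.size, LTLf.size]
  | neg φ IH => simp only [trL, ALDLf.size, LTLf.size]; omega
  | conj x y IHx IHy => simp only [trL, ALDLf.size, LTLf.size]; omega
  | disj x y IHx IHy => simp only [trL, ALDLf.size, LTLf.size]; omega
  | next φ IH =>
    simp only [trL, Unext, ALDLf.size, LTLf.size, List.length_cons, List.length_nil]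
    omega
  | until_ x y IHx IHy =>
    simp only [trL, Uun, ALDLf.size, LTLf.size, List.length_cons, List.length_nil]
    omega

/-- Some atom occurring in an LTLf formula. -/
def LTLf.firstAtom : LTLf AP → AP
  | .atom p => p
  | .neg φ => φ.firstAtom
  | .conj x _ => x.firstAtom
  | .disj x _ => x.firstAtom
  | .next φ => φ.firstAtom
  | .until_ x _ => x.firstAtom

end Aux

/-- every LTLf formula has an equivalent ALDLf formula of
linearly bounded size (computable in linear time); consequently, since LTLf
satisfiability is PSPACE-complete and the translation preserves satisfaction,
ALDLf satisfiability is PSPACE-hard. -/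
theorem ltlf_to_aldlf_linear (AP : Type) :
    ∃ (c : ℕ) (tr : LTLf AP → ALDLf AP), ∀ φ : LTLf AP,
      (tr φ).size ≤ c * φ.size ∧
      ∀ (π : List (Set AP)) (i : ℕ), i < π.length →
        (LTLf.Sat π φ i ↔ ALDLf.Sat π i (tr φ)) := by
  by_cases hAP : Nonempty AP
  · obtain ⟨a⟩ := hAP
    refine ⟨6, trL a, fun φ => ⟨trL_size a φ, ?_⟩⟩
    induction φ with
    | atom p =>
      intro π i hi
      simp only [trL, LTLf.Sat]
      exact sat_atom.symm
    | neg φ IH =>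
      intro π i hi
      simp only [trL, LTLf.Sat]
      rw [sat_neg, IH π i hi]
    | conj x y IHx IHy =>
      intro π i hi
      simp only [trL, LTLf.Sat]
      rw [sat_conj, IHx π i hi, IHy π i hi]
    | disj x y IHx IHy =>
      intro π i hi
      simp only [trL, LTLf.Sat]
      rw [sat_disj, IHx π i hi, IHy π i hi]
    | next φ IH =>
      intro π i hi
      simp only [trL, LTLf.Sat]
      rw [sat_dia]
      constructor
      · rintro ⟨h1, h2⟩
        refine ⟨i + 1, h1, ?_, (IH π (i + 1) h1).1 h2⟩
        exact (relNext a _ π i (i + 1)).2 ⟨rfl, hi, h1⟩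
      · rintro ⟨j, hjlen, hrel, hφ⟩
        have hr := (relNext a _ π i j).1 hrel
        obtain ⟨rfl, -, -⟩ := hr
        exact ⟨hjlen, (IH π (i + 1) hjlen).2 hφ⟩
    | until_ x y IHx IHy =>
      intro π i hi
      simp only [trL, LTLf.Sat]
      rw [sat_dia]
      constructor
      · rintro ⟨j, hij, hjlen, hby, hax⟩
        refine ⟨j, hjlen, ?_, (IHy π j hjlen).1 hby⟩
        exact (relUntil a (trL a x) _ π i j hjlen).2
          ⟨hij, fun k h1 h2 => (IHx π k (by omega)).1 (hax k h1 h2)⟩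
      · rintro ⟨j, hjlen, hrel, hb⟩
        have hr := (relUntil a (trL a x) _ π i j hjlen).1 hrel
        exact ⟨j, hr.1, hjlen, (IHy π j hjlen).2 hb,
          fun k h1 h2 => (IHx π k (by omega)).2 (hr.2 k h1 h2)⟩
  · exact ⟨1, fun φ => absurd ⟨φ.firstAtom⟩ hAP, fun φ => absurd ⟨φ.firstAtom⟩ hAP⟩
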